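/- For all z, t ∈ ℂ with t ≠ 0, the doubly infinite series ∑_{n=−∞}^{∞} J_n(z) tⁿ converges and equals exp((z/2)(t − 1/t)). -/

import Mathlib

/-- Bessel function of the first kind of nonnegative integer order `n`:
`J_n(z) = ∑_{k=0}^∞ (-1)^k (z/2)^(2k+n) / (k! (k+n)!)`. -/
noncomputable def besselJNat (n : ℕ) (z : ℂ) : ℂ :=
  ∑' k : ℕ, (-1) ^ k * (z / 2) ^ (2 * k + n) / (k.factorial * (k + n).factorial)

/-- Bessel function of the first kind of integer order, with
`J_{-n}(z) = (-1)^n J_n(z)` for `n ≥ 0`. -/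
noncomputable def besselJ (n : ℤ) (z : ℂ) : ℂ :=
  if 0 ≤ n then besselJNat n.toNat z else (-1) ^ (-n).toNat * besselJNat (-n).toNat z

/-- The reindexing bijection used to regroup the double exponential series by
powers of `t`. -/
def eZN : ℤ × ℕ ≃ ℕ × ℕ where
  toFun p := if 0 ≤ p.1 then (p.1.toNat + p.2, p.2) else (p.2, p.2 + (-p.1).toNat)
  invFun q := ((q.1 : ℤ) - q.2, min q.1 q.2)
  left_inv p := by
    obtain ⟨n, j⟩ := p
    by_cases h : 0 ≤ n <;> simp [h, Prod.ext_iff] <;> omega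
  right_inv q := by
    obtain ⟨m, k⟩ := q
    dsimp only
    by_cases h : (k : ℤ) ≤ (m : ℤ)
    · rw [if_pos (by omega)]
      simp [Prod.ext_iff]; omega
    · rw [if_neg (by omega)]
      simp [Prod.ext_iff]; omega

lemma summable_besselTerm (N : ℕ) (z : ℂ) :
    Summable fun k : ℕ => (-1 : ℂ) ^ k * (z / 2) ^ (2 * k + N) /
      (k.factorial * (k + N).factorial) := by
  apply Summable.of_norm
  have hs : Summable fun k : ℕ => ‖z / 2‖ ^ N * ((‖z / 2‖ ^ 2) ^ k / k.factorial) :=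
    (Real.summable_pow_div_factorial _).mul_left _
  apply hs.of_nonneg_of_le (fun k => norm_nonneg _)
  intro k
  have hk1 : (1 : ℝ) ≤ (k + N).factorial := by exact_mod_cast (Nat.factorial_pos _)
  have hk0 : (0 : ℝ) < (k.factorial : ℝ) := by exact_mod_cast (Nat.factorial_pos _)
  have hnorm : ‖(-1 : ℂ) ^ k * (z / 2) ^ (2 * k + N) / (↑k.factorial * ↑(k + N).factorial)‖
      = ‖z / 2‖ ^ (2 * k + N) / ((k.factorial : ℝ) * (k + N).factorial) := by
    simp [norm_div, norm_mul, norm_pow, abs_of_nonneg]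
  rw [hnorm]
  calc ‖z / 2‖ ^ (2 * k + N) / ((k.factorial : ℝ) * (k + N).factorial)
      ≤ ‖z / 2‖ ^ (2 * k + N) / ((k.factorial : ℝ) * 1) := by gcongr
    _ = ‖z / 2‖ ^ N * ((‖z / 2‖ ^ 2) ^ k / k.factorial) := by
        rw [← pow_mul, pow_add, mul_one]
        ring

theorem besselJ_generating_function (z t : ℂ) (ht : t ≠ 0) :
    HasSum (fun n : ℤ => besselJ n z * t ^ n)
      (Complex.exp ((z / 2) * (t - 1 / t))) := by
  obtain ⟨A, hA⟩ : ∃ A : ℕ → ℂ, A = fun m : ℕ => (z * t / 2) ^ m / m.factorial := ⟨_, rfl⟩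
  obtain ⟨B, hB⟩ : ∃ B : ℕ → ℂ, B = fun k : ℕ => (-(z / (2 * t))) ^ k / k.factorial := ⟨_, rfl⟩
  have ha : HasSum A (Complex.exp (z * t / 2)) := by
    rw [hA, Complex.exp_eq_exp_ℂ]; exact NormedSpace.expSeries_div_hasSum_exp _
  have hb : HasSum B (Complex.exp (-(z / (2 * t)))) := by
    rw [hB, Complex.exp_eq_exp_ℂ]; exact NormedSpace.expSeries_div_hasSum_exp _
  have hna : Summable fun m : ℕ => ‖A m‖ := by
    rw [hA]
    simp only [norm_div, norm_pow, Complex.norm_natCast]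
    exact Real.summable_pow_div_factorial _
  have hnb : Summable fun k : ℕ => ‖B k‖ := by
    rw [hB]
    simp only [norm_div, norm_pow, Complex.norm_natCast]
    exact Real.summable_pow_div_factorial _
  have hf : HasSum (fun p : ℕ × ℕ => A p.1 * B p.2)
      (Complex.exp (z * t / 2) * Complex.exp (-(z / (2 * t)))) :=
    ha.mul hb (summable_mul_of_summable_norm hna hnb)
  have hexp : Complex.exp (z * t / 2) * Complex.exp (-(z / (2 * t)))
      = Complex.exp ((z / 2) * (t - 1 / t)) := by
    rw [← Complex.exp_add]
    congr 1
    field_simp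
    ring
  rw [← hexp]
  have hfe : HasSum ((fun p : ℕ × ℕ => A p.1 * B p.2) ∘ eZN)
      (Complex.exp (z * t / 2) * Complex.exp (-(z / (2 * t)))) :=
    eZN.hasSum_iff.2 hf
  apply hfe.prod_fiberwise
  intro n
  by_cases hn : 0 ≤ n
  · set N := n.toNat with hN
    have htn : t ^ (n : ℤ) = t ^ N := by
      have h1 : (n : ℤ) = (N : ℤ) := by omega
      rw [h1, zpow_natCast]
    have key : ∀ j : ℕ, ((fun p : ℕ × ℕ => A p.1 * B p.2) ∘ eZN) (n, j)
        = (-1) ^ j * (z / 2) ^ (2 * j + N) / (j.factorial * (j + N).factorial) * t ^ N := by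
      intro j
      have hE : eZN (n, j) = (N + j, j) := by simp [eZN, hn, hN]
      simp only [Function.comp_apply, hE, hA, hB]
      have h1 : ((N + j).factorial : ℂ) ≠ 0 := Nat.cast_ne_zero.2 (Nat.factorial_pos _).ne'
      have h2 : ((j).factorial : ℂ) ≠ 0 := Nat.cast_ne_zero.2 (Nat.factorial_pos _).ne'
      rw [Nat.add_comm j N]
      field_simp
      rw [neg_pow]
      simp only [div_pow, mul_pow]
      field_simp
      ring
    have hgh : HasSum
        (fun k : ℕ => (-1 : ℂ) ^ k * (z / 2) ^ (2 * k + N) /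
          (k.factorial * (k + N).factorial)) (besselJNat N z) :=
      (summable_besselTerm N z).hasSum
    have hbj : besselJ n z = besselJNat N z := by rw [besselJ, if_pos hn]
    rw [hbj, htn]
    simp only [key]
    exact hgh.mul_right _
  · set N := (-n).toNat with hN
    have htn : t ^ (n : ℤ) = (t ^ N)⁻¹ := by
      have h1 : (n : ℤ) = -(N : ℤ) := by omega
      rw [h1, zpow_neg, zpow_natCast]
    have key : ∀ j : ℕ, ((fun p : ℕ × ℕ => A p.1 * B p.2) ∘ eZN) (n, j)
        = (-1) ^ N * ((-1) ^ j * (z / 2) ^ (2 * j + N) /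
            (j.factorial * (j + N).factorial)) * (t ^ N)⁻¹ := by
      intro j
      have hE : eZN (n, j) = (j, j + N) := by simp [eZN, hn, hN]
      simp only [Function.comp_apply, hE, hA, hB]
      have h1 : ((j + N).factorial : ℂ) ≠ 0 := Nat.cast_ne_zero.2 (Nat.factorial_pos _).ne'
      have h2 : ((j).factorial : ℂ) ≠ 0 := Nat.cast_ne_zero.2 (Nat.factorial_pos _).ne'
      field_simp
      rw [neg_pow]
      simp only [div_pow, mul_pow]
      field_simp
      ring
    have hgh : HasSum
        (fun k : ℕ => (-1 : ℂ) ^ k * (z / 2) ^ (2 * k + N) /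
          (k.factorial * (k + N).factorial)) (besselJNat N z) :=
      (summable_besselTerm N z).hasSum
    have hbj : besselJ n z = (-1) ^ N * besselJNat N z := by rw [besselJ, if_neg hn]
    rw [hbj, htn]
    simp only [key]
    exact (hgh.mul_left _).mul_right _
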